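/- arXiv:math/0701510 — 3 statements merged into one kernel-verified Lean document; each statement's English description precedes it below -/
import Mathlib

section
/- Let u, v be real-valued C¹ functions of (α,β) on a region where sin β ≠ 0, and let F = u + ι(α,β)·v. Then ∂F/∂ιₗ = 2v holds if and only if ∂u/∂ιₗ = ι·(∂v/∂ιₗ). -/
open Quaternion

noncomputable section

/-- `ι(α,β) = cos α sin β · i + sin α sin β · j + cos β · k`, a unit imaginary quaternion. -/
def iota (α β : ℝ) : ℍ[ℝ] :=
  ⟨0, Real.cos α * Real.sin β, Real.sin α * Real.sin β, Real.cos β⟩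
/-- `ι_α = ∂ι/∂α`. -/
def iotaA (α β : ℝ) : ℍ[ℝ] := deriv (fun a => iota a β) α
/-- `ι_β = ∂ι/∂β`. -/
def iotaB (α β : ℝ) : ℍ[ℝ] := deriv (fun b => iota α b) β

/-- Partial derivative in `α` of a quaternion-valued function of `(α,β)`. -/
def pA (g : ℝ → ℝ → ℍ[ℝ]) (α β : ℝ) : ℍ[ℝ] := deriv (fun a => g a β) α
/-- Partial derivative in `β` of a quaternion-valued function of `(α,β)`. -/
def pB (g : ℝ → ℝ → ℍ[ℝ]) (α β : ℝ) : ℍ[ℝ] := deriv (fun b => g α b) β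
/-- The left angular derivative `∂g/∂ιₗ := ι_α⁻¹ (∂g/∂α) + ι_β⁻¹ (∂g/∂β)`. -/
def DI (g : ℝ → ℝ → ℍ[ℝ]) (α β : ℝ) : ℍ[ℝ] :=
  (iotaA α β)⁻¹ * pA g α β + (iotaB α β)⁻¹ * pB g α β

/-- A "mk" for quaternions that keeps the type `ℍ[ℝ]` on the nose. -/
def mkQ (a b c d : ℝ) : ℍ[ℝ] := ⟨a, b, c, d⟩

@[simp] lemma mkQ_re (a b c d : ℝ) : (mkQ a b c d).re = a := rfl
@[simp] lemma mkQ_imI (a b c d : ℝ) : (mkQ a b c d).imI = b := rfl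
@[simp] lemma mkQ_imJ (a b c d : ℝ) : (mkQ a b c d).imJ = c := rfl
@[simp] lemma mkQ_imK (a b c d : ℝ) : (mkQ a b c d).imK = d := rfl

lemma quat_hasDerivAt {f1 f2 f3 f4 : ℝ → ℝ} {f1' f2' f3' f4' : ℝ} {x : ℝ}
    (h1 : HasDerivAt f1 f1' x) (h2 : HasDerivAt f2 f2' x)
    (h3 : HasDerivAt f3 f3' x) (h4 : HasDerivAt f4 f4' x) :
    HasDerivAt (fun t => mkQ (f1 t) (f2 t) (f3 t) (f4 t))
      (mkQ f1' f2' f3' f4') x := by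
  have e : (fun t => mkQ (f1 t) (f2 t) (f3 t) (f4 t))
      = fun t => f1 t • mkQ 1 0 0 0 + f2 t • mkQ 0 1 0 0
          + f3 t • mkQ 0 0 1 0 + f4 t • mkQ 0 0 0 1 := by
    funext t; ext <;> simp
  rw [e]
  have h := (((h1.smul_const (mkQ 1 0 0 0)).add (h2.smul_const (mkQ 0 1 0 0))).add
      (h3.smul_const (mkQ 0 0 1 0))).add (h4.smul_const (mkQ 0 0 0 1))
  refine h.congr_deriv ?_
  ext <;> simp

lemma coe_hasDerivAt {f : ℝ → ℝ} {f' x : ℝ} (h : HasDerivAt f f' x) :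
    HasDerivAt (fun t => ((f t : ℝ) : ℍ[ℝ])) ((f' : ℝ) : ℍ[ℝ]) x := by
  have e : (fun t => ((f t : ℝ) : ℍ[ℝ])) = fun t => mkQ (f t) 0 0 0 := by
    funext t; ext <;> simp [mkQ]
  have e' : ((f' : ℝ) : ℍ[ℝ]) = mkQ f' 0 0 0 := by ext <;> simp [mkQ]
  rw [e, e']
  exact quat_hasDerivAt h (hasDerivAt_const _ _) (hasDerivAt_const _ _) (hasDerivAt_const _ _)

lemma iota_hasDerivAt_a (α β : ℝ) :
    HasDerivAt (fun a => iota a β)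
      (mkQ 0 (-Real.sin α * Real.sin β) (Real.cos α * Real.sin β) 0) α := by
  have h := quat_hasDerivAt (hasDerivAt_const α (0:ℝ))
    ((Real.hasDerivAt_cos α).mul_const (Real.sin β))
    ((Real.hasDerivAt_sin α).mul_const (Real.sin β))
    (hasDerivAt_const α (Real.cos β))
  exact h

lemma iota_hasDerivAt_b (α β : ℝ) :
    HasDerivAt (fun b => iota α b)
      (mkQ 0 (Real.cos α * Real.cos β) (Real.sin α * Real.cos β) (-Real.sin β)) β := by
  have h := quat_hasDerivAt (hasDerivAt_const β (0:ℝ))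
    ((Real.hasDerivAt_sin β).const_mul (Real.cos α))
    ((Real.hasDerivAt_sin β).const_mul (Real.sin α))
    (Real.hasDerivAt_cos β)
  exact h

lemma iotaA_eq (α β : ℝ) :
    iotaA α β = mkQ 0 (-Real.sin α * Real.sin β) (Real.cos α * Real.sin β) 0 :=
  (iota_hasDerivAt_a α β).deriv

lemma iotaB_eq (α β : ℝ) :
    iotaB α β = mkQ 0 (Real.cos α * Real.cos β) (Real.sin α * Real.cos β) (-Real.sin β) :=
  (iota_hasDerivAt_b α β).deriv

lemma iota_mk (α β : ℝ) :
    iota α β = mkQ 0 (Real.cos α * Real.sin β) (Real.sin α * Real.sin β) (Real.cos β) := rfl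

lemma anti_A (α β : ℝ) :
    mkQ 0 (-Real.sin α * Real.sin β) (Real.cos α * Real.sin β) 0 * iota α β
      = -(iota α β * mkQ 0 (-Real.sin α * Real.sin β) (Real.cos α * Real.sin β) 0) := by
  rw [iota_mk]
  ext <;> simp [Quaternion.re_mul, Quaternion.imI_mul, Quaternion.imJ_mul, Quaternion.imK_mul] <;>
    ring

lemma anti_B (α β : ℝ) :
    mkQ 0 (Real.cos α * Real.cos β) (Real.sin α * Real.cos β) (-Real.sin β) * iota α β
      = -(iota α β * mkQ 0 (Real.cos α * Real.cos β) (Real.sin α * Real.cos β) (-Real.sin β)) := by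
  rw [iota_mk]
  ext <;> simp [Quaternion.re_mul, Quaternion.imI_mul, Quaternion.imJ_mul, Quaternion.imK_mul]
  case a => linear_combination (-2 * Real.sin β * Real.cos β) * Real.sin_sq_add_cos_sq α
  all_goals ring

lemma A_ne (α β : ℝ) (hs : Real.sin β ≠ 0) :
    mkQ 0 (-Real.sin α * Real.sin β) (Real.cos α * Real.sin β) 0 ≠ 0 := by
  intro h0
  have h2 : -Real.sin α * Real.sin β = 0 := by
    have := congrArg QuaternionAlgebra.imI h0; simpa using this
  have h3 : Real.cos α * Real.sin β = 0 := by
    have := congrArg QuaternionAlgebra.imJ h0; simpa using this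
  have h4 : Real.sin α = 0 := by
    rcases mul_eq_zero.mp h2 with h | h
    · linarith [neg_eq_zero.mp h]
    · exact absurd h hs
  have h5 : Real.cos α = 0 := by
    rcases mul_eq_zero.mp h3 with h | h
    · exact h
    · exact absurd h hs
  have := Real.sin_sq_add_cos_sq α
  rw [h4, h5] at this; norm_num at this

lemma B_ne (α β : ℝ) (hs : Real.sin β ≠ 0) :
    mkQ 0 (Real.cos α * Real.cos β) (Real.sin α * Real.cos β) (-Real.sin β) ≠ 0 := by
  intro h0
  have h2 : -Real.sin β = 0 := by
    have := congrArg QuaternionAlgebra.imK h0; simpa using this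
  exact hs (neg_eq_zero.mp h2)

lemma inv_anticomm {a b : ℍ[ℝ]} (ha : a ≠ 0) (h : a * b = -(b * a)) :
    a⁻¹ * b = -(b * a⁻¹) := by
  have h1 := congrArg (fun q => a⁻¹ * q * a⁻¹) h
  simp only [mul_neg, neg_mul, ← mul_assoc, inv_mul_cancel₀ ha, one_mul] at h1
  rw [mul_assoc, mul_inv_cancel₀ ha, mul_one] at h1
  rw [h1, neg_neg]

lemma key_alg (A B I : ℍ[ℝ]) (hA : A ≠ 0) (hB : B ≠ 0)
    (haI : A * I = -(I * A)) (hbI : B * I = -(I * B))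
    (uA uB vA vB w : ℝ) :
    A⁻¹ * ((uA : ℍ[ℝ]) + (w • A + vA • I)) + B⁻¹ * ((uB : ℍ[ℝ]) + (w • B + vB • I))
      = (A⁻¹ * (uA : ℍ[ℝ]) + B⁻¹ * (uB : ℍ[ℝ])) + ((2 * w : ℝ) : ℍ[ℝ])
        - I * (A⁻¹ * (vA : ℍ[ℝ]) + B⁻¹ * (vB : ℍ[ℝ])) := by
  have hA' := inv_anticomm hA haI
  have hB' := inv_anticomm hB hbI
  have h2w : ((2 * w : ℝ) : ℍ[ℝ]) = w • (1 : ℍ[ℝ]) + w • 1 := by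
    ext <;> simp
    ring
  simp only [mul_add, mul_smul_comm, inv_mul_cancel₀ hA, inv_mul_cancel₀ hB,
    Quaternion.mul_coe_eq_smul, hA', hB', h2w, smul_neg]
  abel

lemma add_sub_eq_iff_aux {G : Type*} [AddCommGroup G] (a b c : G) :
    a + c - b = c ↔ a = b := by
  constructor
  · intro h
    have h2 : a + c - b - c = 0 := by rw [h]; exact sub_self c
    have h3 : a - b = 0 := by
      calc a - b = a + c - b - c := by abel
        _ = 0 := h2
    exact sub_eq_zero.mp h3
  · rintro rfl; abel

/-- For real-valued `C¹` functions `u, v` of `(α,β)` on a region where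
`sin β ≠ 0` and `F = u + ι v`, the equation `∂F/∂ιₗ = 2v` holds iff
`∂u/∂ιₗ = ι (∂v/∂ιₗ)`. -/
theorem angular_deriv_eq_iff (S : Set (ℝ × ℝ)) (hS : IsOpen S)
    (hSsin : ∀ x ∈ S, Real.sin x.2 ≠ 0)
    (u v : ℝ → ℝ → ℝ)
    (hu : ContDiffOn ℝ 1 (fun x : ℝ × ℝ => u x.1 x.2) S)
    (hv : ContDiffOn ℝ 1 (fun x : ℝ × ℝ => v x.1 x.2) S) :
    ∀ x ∈ S,
      (DI (fun a b => ((u a b : ℝ) : ℍ[ℝ]) + iota a b * ((v a b : ℝ) : ℍ[ℝ])) x.1 x.2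
          = ((2 * v x.1 x.2 : ℝ) : ℍ[ℝ]))
      ↔ DI (fun a b => ((u a b : ℝ) : ℍ[ℝ])) x.1 x.2
          = iota x.1 x.2 * DI (fun a b => ((v a b : ℝ) : ℍ[ℝ])) x.1 x.2 := by
  intro x hx
  obtain ⟨α, β⟩ := x
  simp only at *
  have hsin : Real.sin β ≠ 0 := hSsin (α, β) hx
  -- differentiability of u and v in each variable
  have hud : DifferentiableAt ℝ (fun p : ℝ × ℝ => u p.1 p.2) (α, β) :=
    (hu.differentiableOn one_ne_zero).differentiableAt (hS.mem_nhds hx)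
  have hvd : DifferentiableAt ℝ (fun p : ℝ × ℝ => v p.1 p.2) (α, β) :=
    (hv.differentiableOn one_ne_zero).differentiableAt (hS.mem_nhds hx)
  have hu_a : DifferentiableAt ℝ (fun a => u a β) α :=
    by have := hud.comp α (DifferentiableAt.prodMk (differentiableAt_fun_id : DifferentiableAt ℝ (fun a : ℝ => a) α) (differentiableAt_const β)); exact this
  have hu_b : DifferentiableAt ℝ (fun b => u α b) β :=
    by have := hud.comp β (DifferentiableAt.prodMk (differentiableAt_const α) differentiableAt_fun_id); exact this
  have hv_a : DifferentiableAt ℝ (fun a => v a β) α :=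
    by have := hvd.comp α (DifferentiableAt.prodMk (differentiableAt_fun_id : DifferentiableAt ℝ (fun a : ℝ => a) α) (differentiableAt_const β)); exact this
  have hv_b : DifferentiableAt ℝ (fun b => v α b) β :=
    by have := hvd.comp β (DifferentiableAt.prodMk (differentiableAt_const α) differentiableAt_fun_id); exact this
  set uA := deriv (fun a => u a β) α with huA
  set uB := deriv (fun b => u α b) β with huB
  set vA := deriv (fun a => v a β) α with hvA
  set vB := deriv (fun b => v α b) β with hvB
  have hUA : HasDerivAt (fun a => u a β) uA α := hu_a.hasDerivAt
  have hUB : HasDerivAt (fun b => u α b) uB β := hu_b.hasDerivAt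
  have hVA : HasDerivAt (fun a => v a β) vA α := hv_a.hasDerivAt
  have hVB : HasDerivAt (fun b => v α b) vB β := hv_b.hasDerivAt
  set Aq := mkQ 0 (-Real.sin α * Real.sin β) (Real.cos α * Real.sin β) 0 with hAq
  set Bq := mkQ 0 (Real.cos α * Real.cos β) (Real.sin α * Real.cos β) (-Real.sin β) with hBq
  -- partial derivatives of the coercions
  have hpAu : pA (fun a b => ((u a b : ℝ) : ℍ[ℝ])) α β = ((uA : ℝ) : ℍ[ℝ]) :=
    (coe_hasDerivAt hUA).deriv
  have hpBu : pB (fun a b => ((u a b : ℝ) : ℍ[ℝ])) α β = ((uB : ℝ) : ℍ[ℝ]) :=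
    (coe_hasDerivAt hUB).deriv
  have hpAv : pA (fun a b => ((v a b : ℝ) : ℍ[ℝ])) α β = ((vA : ℝ) : ℍ[ℝ]) :=
    (coe_hasDerivAt hVA).deriv
  have hpBv : pB (fun a b => ((v a b : ℝ) : ℍ[ℝ])) α β = ((vB : ℝ) : ℍ[ℝ]) :=
    (coe_hasDerivAt hVB).deriv
  -- partial derivatives of F
  have eFa : (fun a => ((u a β : ℝ) : ℍ[ℝ]) + iota a β * ((v a β : ℝ) : ℍ[ℝ]))
      = fun a => ((u a β : ℝ) : ℍ[ℝ]) + v a β • iota a β := by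
    funext a; rw [Quaternion.mul_coe_eq_smul]
  have eFb : (fun b => ((u α b : ℝ) : ℍ[ℝ]) + iota α b * ((v α b : ℝ) : ℍ[ℝ]))
      = fun b => ((u α b : ℝ) : ℍ[ℝ]) + v α b • iota α b := by
    funext b; rw [Quaternion.mul_coe_eq_smul]
  have hpAF : pA (fun a b => ((u a b : ℝ) : ℍ[ℝ]) + iota a b * ((v a b : ℝ) : ℍ[ℝ])) α β
      = ((uA : ℝ) : ℍ[ℝ]) + (v α β • Aq + vA • iota α β) := by
    have h := (coe_hasDerivAt hUA).add (hVA.smul (iota_hasDerivAt_a α β))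
    rw [pA, eFa]
    exact h.deriv
  have hpBF : pB (fun a b => ((u a b : ℝ) : ℍ[ℝ]) + iota a b * ((v a b : ℝ) : ℍ[ℝ])) α β
      = ((uB : ℝ) : ℍ[ℝ]) + (v α β • Bq + vB • iota α β) := by
    have h := (coe_hasDerivAt hUB).add (hVB.smul (iota_hasDerivAt_b α β))
    rw [pB, eFb]
    exact h.deriv
  have hAne := A_ne α β hsin
  have hBne := B_ne α β hsin
  -- the key identity
  have E : DI (fun a b => ((u a b : ℝ) : ℍ[ℝ]) + iota a b * ((v a b : ℝ) : ℍ[ℝ])) α β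
      = DI (fun a b => ((u a b : ℝ) : ℍ[ℝ])) α β + ((2 * v α β : ℝ) : ℍ[ℝ])
        - iota α β * DI (fun a b => ((v a b : ℝ) : ℍ[ℝ])) α β := by
    rw [DI, DI, DI, hpAF, hpBF, hpAu, hpBu, hpAv, hpBv, iotaA_eq, iotaB_eq, ← hAq, ← hBq]
    exact key_alg Aq Bq (iota α β) hAne hBne (anti_A α β) (anti_B α β) uA uB vA vB (v α β)
  rw [E]
  exact add_sub_eq_iff_aux _ _ _
end
end

section
/- Let v be any real-valued C² function of (α,β) on a region where sin β ≠ 0. Then ∂²v/∂ιₗ² = −ι·(∂v/∂ιₗ) − (1/sin²β)·(∂²v/∂α²) − (∂²v/∂β²) − cot β·(∂v/∂β), where ∂²v/∂ιₗ² denotes the operator ∂/∂ιₗ applied twice to v and ι = ι(α,β). -/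
open Quaternion

noncomputable section

section Helpers

open Real

/-- A `mk`-quaternion with the right type ascription. -/
def qmk (a b c d : ℝ) : ℍ[ℝ] := ⟨a, b, c, d⟩

@[simp] lemma qmk_re (a b c d : ℝ) : (qmk a b c d).re = a := rfl
@[simp] lemma qmk_imI (a b c d : ℝ) : (qmk a b c d).imI = b := rfl
@[simp] lemma qmk_imJ (a b c d : ℝ) : (qmk a b c d).imJ = c := rfl
@[simp] lemma qmk_imK (a b c d : ℝ) : (qmk a b c d).imK = d := rfl

lemma coe_qmk (r : ℝ) : ((r : ℝ) : ℍ[ℝ]) = qmk r 0 0 0 := rfl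

lemma iota_qmk (a b : ℝ) : iota a b = qmk 0 (cos a * sin b) (sin a * sin b) (cos b) := rfl

lemma hasDerivAt_qmk {f1 f2 f3 f4 : ℝ → ℝ} {g1 g2 g3 g4 : ℝ} {t : ℝ}
    (h1 : HasDerivAt f1 g1 t) (h2 : HasDerivAt f2 g2 t)
    (h3 : HasDerivAt f3 g3 t) (h4 : HasDerivAt f4 g4 t) :
    HasDerivAt (fun s => qmk (f1 s) (f2 s) (f3 s) (f4 s)) (qmk g1 g2 g3 g4) t := by
  have key := (((h1.smul_const (qmk 1 0 0 0)).add (h2.smul_const (qmk 0 1 0 0))).add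
      (h3.smul_const (qmk 0 0 1 0))).add (h4.smul_const (qmk 0 0 0 1))
  have hfun : (fun s => qmk (f1 s) (f2 s) (f3 s) (f4 s))
      = fun s => f1 s • qmk 1 0 0 0 + f2 s • qmk 0 1 0 0 + f3 s • qmk 0 0 1 0
          + f4 s • qmk 0 0 0 1 := by
    funext s; ext <;> simp
  have hg : qmk g1 g2 g3 g4 = g1 • qmk 1 0 0 0 + g2 • qmk 0 1 0 0 + g3 • qmk 0 0 1 0
      + g4 • qmk 0 0 0 1 := by
    ext <;> simp
  rw [hfun, hg]; exact key

lemma hasDerivAt_coeH {f : ℝ → ℝ} {f' t : ℝ} (h : HasDerivAt f f' t) :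
    HasDerivAt (fun s => ((f s : ℝ) : ℍ[ℝ])) (qmk f' 0 0 0) t := by
  simp only [coe_qmk]
  exact hasDerivAt_qmk h (hasDerivAt_const t 0) (hasDerivAt_const t 0) (hasDerivAt_const t 0)

lemma hasDerivAt_iota_a (a b : ℝ) :
    HasDerivAt (fun a => iota a b) (qmk 0 (-sin a * sin b) (cos a * sin b) 0) a := by
  have := hasDerivAt_qmk (f1 := fun _ => 0) (f2 := fun a => cos a * sin b)
    (f3 := fun a => sin a * sin b) (f4 := fun _ => cos b)
    (hasDerivAt_const a 0) (((Real.hasDerivAt_cos a).mul_const (sin b)))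
    (((Real.hasDerivAt_sin a).mul_const (sin b))) (hasDerivAt_const a (cos b))
  simpa [iota_qmk] using this

lemma hasDerivAt_iota_b (a b : ℝ) :
    HasDerivAt (fun b => iota a b) (qmk 0 (cos a * cos b) (sin a * cos b) (-sin b)) b := by
  have := hasDerivAt_qmk (f1 := fun _ => 0) (f2 := fun b => cos a * sin b)
    (f3 := fun b => sin a * sin b) (f4 := fun b => cos b)
    (hasDerivAt_const b 0) (((Real.hasDerivAt_sin b).const_mul (cos a)))
    (((Real.hasDerivAt_sin b).const_mul (sin a))) (Real.hasDerivAt_cos b)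
  simpa [iota_qmk] using this

lemma iotaA_qmk (a b : ℝ) : iotaA a b = qmk 0 (-sin a * sin b) (cos a * sin b) 0 :=
  (hasDerivAt_iota_a a b).deriv

lemma iotaB_qmk (a b : ℝ) : iotaB a b = qmk 0 (cos a * cos b) (sin a * cos b) (-sin b) :=
  (hasDerivAt_iota_b a b).deriv

lemma iotaA_inv (a b : ℝ) (hb : sin b ≠ 0) :
    (iotaA a b)⁻¹ = qmk 0 (sin a / sin b) (-(cos a / sin b)) 0 := by
  rw [iotaA_qmk]
  apply inv_eq_of_mul_eq_one_right
  ext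
  · simp only [qmk_re, Quaternion.re_mul, qmk_imI, qmk_imJ, qmk_imK, Quaternion.re_one]
    field_simp
    linear_combination (sin_sq_add_cos_sq a)
  · simp only [qmk_imI, Quaternion.imI_mul, qmk_re, qmk_imJ, qmk_imK, Quaternion.imI_one]
    ring
  · simp only [qmk_imJ, Quaternion.imJ_mul, qmk_re, qmk_imI, qmk_imK, Quaternion.imJ_one]
    ring
  · simp only [qmk_imK, Quaternion.imK_mul, qmk_re, qmk_imI, qmk_imJ, Quaternion.imK_one]
    field_simp
    ring

lemma iotaB_inv (a b : ℝ) :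
    (iotaB a b)⁻¹ = qmk 0 (-(cos a * cos b)) (-(sin a * cos b)) (sin b) := by
  rw [iotaB_qmk]
  apply inv_eq_of_mul_eq_one_right
  ext
  · simp only [qmk_re, Quaternion.re_mul, qmk_imI, qmk_imJ, qmk_imK, Quaternion.re_one]
    linear_combination Real.cos b ^ 2 * (sin_sq_add_cos_sq a) + (sin_sq_add_cos_sq b)
  · simp only [qmk_imI, Quaternion.imI_mul, qmk_re, qmk_imJ, qmk_imK, Quaternion.imI_one]
    ring
  · simp only [qmk_imJ, Quaternion.imJ_mul, qmk_re, qmk_imI, qmk_imK, Quaternion.imJ_one]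
    ring
  · simp only [qmk_imK, Quaternion.imK_mul, qmk_re, qmk_imI, qmk_imJ, Quaternion.imK_one]
    ring

lemma DI_eq (g : ℝ → ℝ → ℍ[ℝ]) (α β : ℝ) :
    DI g α β = (iotaA α β)⁻¹ * pA g α β + (iotaB α β)⁻¹ * pB g α β := rfl

end Helpers

set_option maxHeartbeats 1600000 in
theorem second_angular_derivative (S : Set (ℝ × ℝ)) (hS : IsOpen S)
    (hSsin : ∀ x ∈ S, Real.sin x.2 ≠ 0)
    (v : ℝ → ℝ → ℝ)
    (hv : ContDiffOn ℝ 2 (fun x : ℝ × ℝ => v x.1 x.2) S) :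
    ∀ x ∈ S,
      DI (fun a b => DI (fun a' b' => ((v a' b' : ℝ) : ℍ[ℝ])) a b) x.1 x.2
        = -(iota x.1 x.2 * DI (fun a b => ((v a b : ℝ) : ℍ[ℝ])) x.1 x.2)
          - ((((Real.sin x.2)^2)⁻¹ * deriv (fun a => deriv (fun a' => v a' x.2) a) x.1 : ℝ) : ℍ[ℝ])
          - ((deriv (fun b => deriv (fun b' => v x.1 b') b) x.2 : ℝ) : ℍ[ℝ])
          - ((Real.cos x.2 / Real.sin x.2 * deriv (fun b => v x.1 b) x.2 : ℝ) : ℍ[ℝ]) := by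
  set F : ℝ × ℝ → ℝ := fun x : ℝ × ℝ => v x.1 x.2 with hFdef
  rintro ⟨α, β⟩ hx
  have hsb : Real.sin β ≠ 0 := hSsin (α, β) hx
  have hdiff : ∀ y ∈ S, HasFDerivAt F (fderiv ℝ F y) y := fun y hy =>
    ((hv.differentiableOn two_ne_zero).differentiableAt (hS.mem_nhds hy)).hasFDerivAt
  have hva : ∀ a b, (a, b) ∈ S →
      HasDerivAt (fun t => v t b) (fderiv ℝ F (a, b) (1, 0)) a := by
    intro a b hy
    have h := (hdiff (a, b) hy).comp_hasDerivAt a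
      ((hasDerivAt_id a).prodMk (hasDerivAt_const a b))
    exact h
  have hvb : ∀ a b, (a, b) ∈ S →
      HasDerivAt (fun t => v a t) (fderiv ℝ F (a, b) (0, 1)) b := by
    intro a b hy
    have h := (hdiff (a, b) hy).comp_hasDerivAt b
      ((hasDerivAt_const b a).prodMk (hasDerivAt_id b))
    exact h
  have hf'' : HasFDerivAt (fderiv ℝ F) (fderiv ℝ (fderiv ℝ F) (α, β)) (α, β) :=
    (((hv.fderiv_of_isOpen hS (m := 1) (by norm_num)).differentiableOn one_ne_zero).differentiableAt
      (hS.mem_nhds hx)).hasFDerivAt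
  have hata : ∀ w : ℝ × ℝ, HasDerivAt (fun t => fderiv ℝ F (t, β) w)
      (fderiv ℝ (fderiv ℝ F) (α, β) (1, 0) w) α := by
    intro w
    have hcomp : HasDerivAt (fun t => fderiv ℝ F (t, β))
        (fderiv ℝ (fderiv ℝ F) (α, β) (1, 0)) α :=
      hf''.comp_hasDerivAt α ((hasDerivAt_id α).prodMk (hasDerivAt_const α β))
    simpa using hcomp.clm_apply (hasDerivAt_const α w)
  have hatb : ∀ w : ℝ × ℝ, HasDerivAt (fun t => fderiv ℝ F (α, t) w)
      (fderiv ℝ (fderiv ℝ F) (α, β) (0, 1) w) β := by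
    intro w
    have hcomp : HasDerivAt (fun t => fderiv ℝ F (α, t))
        (fderiv ℝ (fderiv ℝ F) (α, β) (0, 1)) β :=
      hf''.comp_hasDerivAt β ((hasDerivAt_const β α).prodMk (hasDerivAt_id β))
    simpa using hcomp.clm_apply (hasDerivAt_const β w)
  have hsymm : fderiv ℝ (fderiv ℝ F) (α, β) (1, 0) (0, 1)
      = fderiv ℝ (fderiv ℝ F) (α, β) (0, 1) (1, 0) :=
    (hv.contDiffAt (hS.mem_nhds hx)).isSymmSndFDerivAt (by norm_num) _ _
  -- the explicit formula for the inner angular derivative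
  have hDIeq : ∀ a b, (a, b) ∈ S →
      DI (fun a' b' => ((v a' b' : ℝ) : ℍ[ℝ])) a b
        = qmk 0
            (fderiv ℝ F (a, b) (1, 0) * Real.sin a / Real.sin b
              - fderiv ℝ F (a, b) (0, 1) * Real.cos a * Real.cos b)
            (-(fderiv ℝ F (a, b) (1, 0) * Real.cos a / Real.sin b)
              - fderiv ℝ F (a, b) (0, 1) * Real.sin a * Real.cos b)
            (fderiv ℝ F (a, b) (0, 1) * Real.sin b) := by
    intro a b hy
    have hsy : Real.sin b ≠ 0 := hSsin (a, b) hy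
    have h1 : pA (fun a' b' => ((v a' b' : ℝ) : ℍ[ℝ])) a b
        = qmk (fderiv ℝ F (a, b) (1, 0)) 0 0 0 := (hasDerivAt_coeH (hva a b hy)).deriv
    have h2 : pB (fun a' b' => ((v a' b' : ℝ) : ℍ[ℝ])) a b
        = qmk (fderiv ℝ F (a, b) (0, 1)) 0 0 0 := (hasDerivAt_coeH (hvb a b hy)).deriv
    rw [DI_eq, h1, h2, iotaA_inv a b hsy, iotaB_inv a b]
    ext <;>
      simp only [qmk_re, qmk_imI, qmk_imJ, qmk_imK, Quaternion.re_mul, Quaternion.imI_mul,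
        Quaternion.imJ_mul, Quaternion.imK_mul, Quaternion.re_add, Quaternion.imI_add,
        Quaternion.imJ_add, Quaternion.imK_add] <;>
      ring
  have hmemA : ∀ᶠ a in nhds α, (a, β) ∈ S :=
    ((continuous_id.prodMk continuous_const).continuousAt).preimage_mem_nhds (hS.mem_nhds hx)
  have hmemB : ∀ᶠ b in nhds β, (α, b) ∈ S :=
    ((continuous_const.prodMk continuous_id).continuousAt).preimage_mem_nhds (hS.mem_nhds hx)
  have hGa : HasDerivAt (fun t => qmk 0
      (fderiv ℝ F (t, β) (1, 0) * Real.sin t / Real.sin β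
        - fderiv ℝ F (t, β) (0, 1) * Real.cos t * Real.cos β)
      (-(fderiv ℝ F (t, β) (1, 0) * Real.cos t / Real.sin β)
        - fderiv ℝ F (t, β) (0, 1) * Real.sin t * Real.cos β)
      (fderiv ℝ F (t, β) (0, 1) * Real.sin β))
      (qmk 0
        ((fderiv ℝ (fderiv ℝ F) (α, β) (1, 0) (1, 0) * Real.sin α
            + fderiv ℝ F (α, β) (1, 0) * Real.cos α) / Real.sin β
          - (fderiv ℝ (fderiv ℝ F) (α, β) (1, 0) (0, 1) * Real.cos α
            + fderiv ℝ F (α, β) (0, 1) * -Real.sin α) * Real.cos β)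
        (-((fderiv ℝ (fderiv ℝ F) (α, β) (1, 0) (1, 0) * Real.cos α
            + fderiv ℝ F (α, β) (1, 0) * -Real.sin α) / Real.sin β)
          - (fderiv ℝ (fderiv ℝ F) (α, β) (1, 0) (0, 1) * Real.sin α
            + fderiv ℝ F (α, β) (0, 1) * Real.cos α) * Real.cos β)
        (fderiv ℝ (fderiv ℝ F) (α, β) (1, 0) (0, 1) * Real.sin β)) α := by
    exact hasDerivAt_qmk (hasDerivAt_const α 0)
      ((((hata (1, 0)).mul (Real.hasDerivAt_sin α)).div_const (Real.sin β)).sub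
        (((hata (0, 1)).mul (Real.hasDerivAt_cos α)).mul_const (Real.cos β)))
      (((((hata (1, 0)).mul (Real.hasDerivAt_cos α)).div_const (Real.sin β)).neg).sub
        (((hata (0, 1)).mul (Real.hasDerivAt_sin α)).mul_const (Real.cos β)))
      ((hata (0, 1)).mul_const (Real.sin β))
  have hGb : HasDerivAt (fun t => qmk 0
      (fderiv ℝ F (α, t) (1, 0) * Real.sin α / Real.sin t
        - fderiv ℝ F (α, t) (0, 1) * Real.cos α * Real.cos t)
      (-(fderiv ℝ F (α, t) (1, 0) * Real.cos α / Real.sin t)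
        - fderiv ℝ F (α, t) (0, 1) * Real.sin α * Real.cos t)
      (fderiv ℝ F (α, t) (0, 1) * Real.sin t))
      (qmk 0
        ((fderiv ℝ (fderiv ℝ F) (α, β) (0, 1) (1, 0) * Real.sin α * Real.sin β
            - fderiv ℝ F (α, β) (1, 0) * Real.sin α * Real.cos β) / Real.sin β ^ 2
          - (fderiv ℝ (fderiv ℝ F) (α, β) (0, 1) (0, 1) * Real.cos α * Real.cos β
            + fderiv ℝ F (α, β) (0, 1) * Real.cos α * -Real.sin β))
        (-((fderiv ℝ (fderiv ℝ F) (α, β) (0, 1) (1, 0) * Real.cos α * Real.sin β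
            - fderiv ℝ F (α, β) (1, 0) * Real.cos α * Real.cos β) / Real.sin β ^ 2)
          - (fderiv ℝ (fderiv ℝ F) (α, β) (0, 1) (0, 1) * Real.sin α * Real.cos β
            + fderiv ℝ F (α, β) (0, 1) * Real.sin α * -Real.sin β))
        (fderiv ℝ (fderiv ℝ F) (α, β) (0, 1) (0, 1) * Real.sin β
          + fderiv ℝ F (α, β) (0, 1) * Real.cos β)) β := by
    exact hasDerivAt_qmk (hasDerivAt_const β 0)
      ((((hatb (1, 0)).mul_const (Real.sin α)).div (Real.hasDerivAt_sin β) hsb).sub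
        (((hatb (0, 1)).mul_const (Real.cos α)).mul (Real.hasDerivAt_cos β)))
      (((((hatb (1, 0)).mul_const (Real.cos α)).div (Real.hasDerivAt_sin β) hsb).neg).sub
        (((hatb (0, 1)).mul_const (Real.sin α)).mul (Real.hasDerivAt_cos β)))
      ((hatb (0, 1)).mul (Real.hasDerivAt_sin β))
  have hpA2 : pA (fun a b => DI (fun a' b' => ((v a' b' : ℝ) : ℍ[ℝ])) a b) α β
      = (qmk 0
        ((fderiv ℝ (fderiv ℝ F) (α, β) (1, 0) (1, 0) * Real.sin α
            + fderiv ℝ F (α, β) (1, 0) * Real.cos α) / Real.sin β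
          - (fderiv ℝ (fderiv ℝ F) (α, β) (1, 0) (0, 1) * Real.cos α
            + fderiv ℝ F (α, β) (0, 1) * -Real.sin α) * Real.cos β)
        (-((fderiv ℝ (fderiv ℝ F) (α, β) (1, 0) (1, 0) * Real.cos α
            + fderiv ℝ F (α, β) (1, 0) * -Real.sin α) / Real.sin β)
          - (fderiv ℝ (fderiv ℝ F) (α, β) (1, 0) (0, 1) * Real.sin α
            + fderiv ℝ F (α, β) (0, 1) * Real.cos α) * Real.cos β)
        (fderiv ℝ (fderiv ℝ F) (α, β) (1, 0) (0, 1) * Real.sin β)) := by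
    have h0 : pA (fun a b => DI (fun a' b' => ((v a' b' : ℝ) : ℍ[ℝ])) a b) α β
        = deriv (fun a => DI (fun a' b' => ((v a' b' : ℝ) : ℍ[ℝ])) a β) α := rfl
    have hEv : (fun a => DI (fun a' b' => ((v a' b' : ℝ) : ℍ[ℝ])) a β)
        =ᶠ[nhds α] (fun t => qmk 0
          (fderiv ℝ F (t, β) (1, 0) * Real.sin t / Real.sin β
            - fderiv ℝ F (t, β) (0, 1) * Real.cos t * Real.cos β)
          (-(fderiv ℝ F (t, β) (1, 0) * Real.cos t / Real.sin β)
            - fderiv ℝ F (t, β) (0, 1) * Real.sin t * Real.cos β)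
          (fderiv ℝ F (t, β) (0, 1) * Real.sin β)) :=
      hmemA.mono fun a ha => hDIeq a β ha
    rw [h0, hEv.deriv_eq]
    exact hGa.deriv
  have hpB2 : pB (fun a b => DI (fun a' b' => ((v a' b' : ℝ) : ℍ[ℝ])) a b) α β
      = (qmk 0
        ((fderiv ℝ (fderiv ℝ F) (α, β) (0, 1) (1, 0) * Real.sin α * Real.sin β
            - fderiv ℝ F (α, β) (1, 0) * Real.sin α * Real.cos β) / Real.sin β ^ 2
          - (fderiv ℝ (fderiv ℝ F) (α, β) (0, 1) (0, 1) * Real.cos α * Real.cos β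
            + fderiv ℝ F (α, β) (0, 1) * Real.cos α * -Real.sin β))
        (-((fderiv ℝ (fderiv ℝ F) (α, β) (0, 1) (1, 0) * Real.cos α * Real.sin β
            - fderiv ℝ F (α, β) (1, 0) * Real.cos α * Real.cos β) / Real.sin β ^ 2)
          - (fderiv ℝ (fderiv ℝ F) (α, β) (0, 1) (0, 1) * Real.sin α * Real.cos β
            + fderiv ℝ F (α, β) (0, 1) * Real.sin α * -Real.sin β))
        (fderiv ℝ (fderiv ℝ F) (α, β) (0, 1) (0, 1) * Real.sin β
          + fderiv ℝ F (α, β) (0, 1) * Real.cos β)) := by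
    have h0 : pB (fun a b => DI (fun a' b' => ((v a' b' : ℝ) : ℍ[ℝ])) a b) α β
        = deriv (fun b => DI (fun a' b' => ((v a' b' : ℝ) : ℍ[ℝ])) α b) β := rfl
    have hEv : (fun b => DI (fun a' b' => ((v a' b' : ℝ) : ℍ[ℝ])) α b)
        =ᶠ[nhds β] (fun t => qmk 0
          (fderiv ℝ F (α, t) (1, 0) * Real.sin α / Real.sin t
            - fderiv ℝ F (α, t) (0, 1) * Real.cos α * Real.cos t)
          (-(fderiv ℝ F (α, t) (1, 0) * Real.cos α / Real.sin t)
            - fderiv ℝ F (α, t) (0, 1) * Real.sin α * Real.cos t)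
          (fderiv ℝ F (α, t) (0, 1) * Real.sin t)) :=
      hmemB.mono fun b hb => hDIeq α b hb
    rw [h0, hEv.deriv_eq]
    exact hGb.deriv
  have hAsc : deriv (fun a => deriv (fun a' => v a' β) a) α
      = fderiv ℝ (fderiv ℝ F) (α, β) (1, 0) (1, 0) := by
    have hEv : (fun a => deriv (fun a' => v a' β) a)
        =ᶠ[nhds α] fun a => fderiv ℝ F (a, β) (1, 0) :=
      hmemA.mono fun a ha => (hva a β ha).deriv
    rw [hEv.deriv_eq]
    exact (hata (1, 0)).deriv
  have hCsc : deriv (fun b => deriv (fun b' => v α b') b) β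
      = fderiv ℝ (fderiv ℝ F) (α, β) (0, 1) (0, 1) := by
    have hEv : (fun b => deriv (fun b' => v α b') b)
        =ᶠ[nhds β] fun b => fderiv ℝ F (α, b) (0, 1) :=
      hmemB.mono fun b hb => (hvb α b hb).deriv
    rw [hEv.deriv_eq]
    exact (hatb (0, 1)).deriv
  have hQsc : deriv (fun b => v α b) β = fderiv ℝ F (α, β) (0, 1) := (hvb α β hx).deriv
  rw [DI_eq, hpA2, hpB2, iotaA_inv α β hsb, iotaB_inv α β, hDIeq α β hx, hAsc, hCsc, hQsc,
    hsymm, iota_qmk, coe_qmk, coe_qmk, coe_qmk]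
  clear hGa hGb hpA2 hpB2 hDIeq hva hvb hdiff hf'' hata hatb hmemA hmemB hAsc hCsc hQsc
  clear hsymm hv hSsin hS hx
  set A : ℝ := fderiv ℝ (fderiv ℝ F) (α, β) (1, 0) (1, 0) with hA
  set B : ℝ := fderiv ℝ (fderiv ℝ F) (α, β) (0, 1) (1, 0) with hB
  set C : ℝ := fderiv ℝ (fderiv ℝ F) (α, β) (0, 1) (0, 1) with hC
  set P : ℝ := fderiv ℝ F (α, β) (1, 0) with hP
  set Q : ℝ := fderiv ℝ F (α, β) (0, 1) with hQ
  set sa : ℝ := Real.sin α with hsa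
  set ca : ℝ := Real.cos α with hca
  set sb : ℝ := Real.sin β with hsb2
  set cb : ℝ := Real.cos β with hcb
  clear_value A B C P Q sa ca sb cb
  have hpy1 : sa ^ 2 + ca ^ 2 = 1 := by rw [hsa, hca]; exact Real.sin_sq_add_cos_sq α
  have hpy2 : sb ^ 2 + cb ^ 2 = 1 := by rw [hsb2, hcb]; exact Real.sin_sq_add_cos_sq β
  ext <;>
    simp only [qmk_re, qmk_imI, qmk_imJ, qmk_imK, Quaternion.re_mul, Quaternion.imI_mul,
      Quaternion.imJ_mul, Quaternion.imK_mul, Quaternion.re_add, Quaternion.imI_add,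
      Quaternion.imJ_add, Quaternion.imK_add, Quaternion.re_neg, Quaternion.imI_neg,
      Quaternion.imJ_neg, Quaternion.imK_neg, Quaternion.re_sub, Quaternion.imI_sub,
      Quaternion.imJ_sub, Quaternion.imK_sub] <;>
    field_simp <;>
    ring_nf <;>
    first
      | linear_combination (-(sb ^ 9 * A) - sb ^ 10 * cb * Q - sb ^ 11 * cb ^ 2 * C
            + 2 * sb ^ 12 * cb * Q) * hpy1 + (-(sb ^ 11 * C)) * hpy2
      | linear_combination (sb ^ 5 * P - sb ^ 5 * cb ^ 2 * P - sb ^ 7 * P) * hpy1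
            + (-(sb ^ 5 * P)) * hpy2
      | linear_combination (-A - sb ^ 2 * cb ^ 2 * C - sb * Q * cb + 2 * sb ^ 3 * Q * cb
            + sb ^ 5 * P - sb ^ 5 * cb ^ 2 * P - sb ^ 7 * P) * hpy1
            + (-(sb ^ 2 * C) + sb ^ 5 * P * (sa ^ 2 + ca ^ 2) - sb ^ 5 * P) * hpy2
      | linear_combination (sb ^ 5 * P - sb ^ 5 * cb ^ 2 * P - sb ^ 7 * P) * hpy1
            + (-(sb ^ 5 * P) + (sa ^ 2 + ca ^ 2) * P * (sb ^ 5 - 1)) * hpy2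
end
end

section
/- Let u, v be real-valued C² functions of (α,β) on a region where sin β ≠ 0, satisfying the Cauchy–Riemann type system (1/sin β)·∂u/∂α = ∂v/∂β and (1/sin β)·∂v/∂α = −∂u/∂β. Then (1/sin²β)·(∂²v/∂α²) + (∂²v/∂β²) = −cot β·(∂v/∂β). -/
noncomputable section

open Real Filter

/-- Partial derivative in the first variable as applied `fderiv`. -/
lemma hasDerivAt_fst {G : ℝ × ℝ → ℝ} {p : ℝ × ℝ} (hG : DifferentiableAt ℝ G p) :
    HasDerivAt (fun a => G (a, p.2)) (fderiv ℝ G p (1, 0)) p.1 := by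
  have hline : HasDerivAt (fun a : ℝ => ((a, p.2) : ℝ × ℝ)) ((1 : ℝ), (0 : ℝ)) p.1 :=
    HasDerivAt.prodMk (hasDerivAt_id p.1) (hasDerivAt_const p.1 p.2)
  have := hG.hasFDerivAt.comp_hasDerivAt p.1 (by simpa using hline)
  exact this

lemma hasDerivAt_snd {G : ℝ × ℝ → ℝ} {p : ℝ × ℝ} (hG : DifferentiableAt ℝ G p) :
    HasDerivAt (fun b => G (p.1, b)) (fderiv ℝ G p (0, 1)) p.2 := by
  have hline : HasDerivAt (fun b : ℝ => ((p.1, b) : ℝ × ℝ)) ((0 : ℝ), (1 : ℝ)) p.2 :=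
    HasDerivAt.prodMk (hasDerivAt_const p.2 p.1) (hasDerivAt_id p.2)
  have := hG.hasFDerivAt.comp_hasDerivAt p.2 (by simpa using hline)
  exact this

/-- Applied second derivative is differentiable-composed. -/
lemma hasDerivAt_apply_fst {G : ℝ × ℝ → ℝ} {p : ℝ × ℝ} (w : ℝ × ℝ)
    (hG : DifferentiableAt ℝ (fderiv ℝ G) p) :
    HasDerivAt (fun a => fderiv ℝ G (a, p.2) w) (fderiv ℝ (fderiv ℝ G) p (1, 0) w) p.1 := by
  have h : DifferentiableAt ℝ (fun y => fderiv ℝ G y w) p := hG.clm_apply (differentiableAt_const w)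
  have h1 := hasDerivAt_fst (G := fun y => fderiv ℝ G y w) h
  have h2 : HasFDerivAt (fun y => fderiv ℝ G y w)
      ((ContinuousLinearMap.apply ℝ ℝ w).comp (fderiv ℝ (fderiv ℝ G) p)) p :=
    (ContinuousLinearMap.apply ℝ ℝ w).hasFDerivAt.comp p hG.hasFDerivAt
  rw [h2.fderiv] at h1
  simpa using h1

lemma hasDerivAt_apply_snd {G : ℝ × ℝ → ℝ} {p : ℝ × ℝ} (w : ℝ × ℝ)
    (hG : DifferentiableAt ℝ (fderiv ℝ G) p) :
    HasDerivAt (fun b => fderiv ℝ G (p.1, b) w) (fderiv ℝ (fderiv ℝ G) p (0, 1) w) p.2 := by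
  have h : DifferentiableAt ℝ (fun y => fderiv ℝ G y w) p := hG.clm_apply (differentiableAt_const w)
  have h1 := hasDerivAt_snd (G := fun y => fderiv ℝ G y w) h
  have h2 : HasFDerivAt (fun y => fderiv ℝ G y w)
      ((ContinuousLinearMap.apply ℝ ℝ w).comp (fderiv ℝ (fderiv ℝ G) p)) p :=
    (ContinuousLinearMap.apply ℝ ℝ w).hasFDerivAt.comp p hG.hasFDerivAt
  rw [h2.fderiv] at h1
  simpa using h1

/-- If real-valued `C²` functions `u, v` of `(α,β)` on a region where
`sin β ≠ 0` satisfy the Cauchy–Riemann type system `(1/sin β) ∂u/∂α = ∂v/∂β` and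
`(1/sin β) ∂v/∂α = -∂u/∂β`, then
`(1/sin²β) ∂²v/∂α² + ∂²v/∂β² = -cot β ∂v/∂β`. -/
theorem CR_implies_angular_laplace (S : Set (ℝ × ℝ)) (hS : IsOpen S)
    (hSsin : ∀ x ∈ S, Real.sin x.2 ≠ 0)
    (u v : ℝ → ℝ → ℝ)
    (hu : ContDiffOn ℝ 2 (fun x : ℝ × ℝ => u x.1 x.2) S)
    (hv : ContDiffOn ℝ 2 (fun x : ℝ × ℝ => v x.1 x.2) S)
    (hCR1 : ∀ x ∈ S, (Real.sin x.2)⁻¹ * deriv (fun a => u a x.2) x.1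
      = deriv (fun b => v x.1 b) x.2)
    (hCR2 : ∀ x ∈ S, (Real.sin x.2)⁻¹ * deriv (fun a => v a x.2) x.1
      = - deriv (fun b => u x.1 b) x.2) :
    ∀ x ∈ S,
      ((Real.sin x.2)^2)⁻¹ * deriv (fun a => deriv (fun a' => v a' x.2) a) x.1
          + deriv (fun b => deriv (fun b' => v x.1 b') b) x.2
        = -(Real.cos x.2 / Real.sin x.2) * deriv (fun b => v x.1 b) x.2 := by
  intro x hx
  set U : ℝ × ℝ → ℝ := fun y => u y.1 y.2 with hUdef
  set V : ℝ × ℝ → ℝ := fun y => v y.1 y.2 with hVdef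
  have hdiffU : ∀ y ∈ S, DifferentiableAt ℝ U y := fun y hy =>
    (hu.contDiffAt (hS.mem_nhds hy)).differentiableAt (by norm_num)
  have hdiffV : ∀ y ∈ S, DifferentiableAt ℝ V y := fun y hy =>
    (hv.contDiffAt (hS.mem_nhds hy)).differentiableAt (by norm_num)
  have hU' : DifferentiableAt ℝ (fderiv ℝ U) x := by
    have h := (hu.contDiffAt (hS.mem_nhds hx)).fderiv_right (m := 1) (by norm_num)
    exact h.differentiableAt one_ne_zero
  have hV' : DifferentiableAt ℝ (fderiv ℝ V) x := by
    have h := (hv.contDiffAt (hS.mem_nhds hx)).fderiv_right (m := 1) (by norm_num)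
    exact h.differentiableAt one_ne_zero
  have hsin : Real.sin x.2 ≠ 0 := hSsin x hx
  -- eventual membership of vertical and horizontal lines in S
  have hmemV : ∀ᶠ b in nhds x.2, (x.1, b) ∈ S := by
    have hc : Continuous (fun b : ℝ => ((x.1, b) : ℝ × ℝ)) := by continuity
    have : (x.1, x.2) ∈ S := by simpa using hx
    exact hc.continuousAt.preimage_mem_nhds (hS.mem_nhds this)
  have hmemH : ∀ᶠ a in nhds x.1, (a, x.2) ∈ S := by
    have hc : Continuous (fun a : ℝ => ((a, x.2) : ℝ × ℝ)) := by continuity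
    have : (x.1, x.2) ∈ S := by simpa using hx
    exact hc.continuousAt.preimage_mem_nhds (hS.mem_nhds this)
  -- B : second β-derivative of v
  have hBeq : ∀ᶠ b in nhds x.2, deriv (fun b' => v x.1 b') b = fderiv ℝ V (x.1, b) (0, 1) := by
    filter_upwards [hmemV] with b hb
    exact (hasDerivAt_snd (G := V) (p := (x.1, b)) (hdiffV _ hb)).deriv
  have hB : HasDerivAt (fun b => deriv (fun b' => v x.1 b') b)
      (fderiv ℝ (fderiv ℝ V) x (0, 1) (0, 1)) x.2 := by
    have h0 := hasDerivAt_apply_snd (G := V) (p := x) (0, 1) hV'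
    exact h0.congr_of_eventuallyEq hBeq
  -- C : first β-derivative of v
  have hC : deriv (fun b => v x.1 b) x.2 = fderiv ℝ V x (0, 1) := by
    have := hasDerivAt_snd (G := V) (p := x) (hdiffV x hx)
    exact this.deriv
  -- D2 : mixed partial of u, β then α fderiv order (0,1)(1,0)
  have hD2' : HasDerivAt (fun b => deriv (fun a => u a b) x.1)
      (fderiv ℝ (fderiv ℝ U) x (0, 1) (1, 0)) x.2 := by
    have h0 := hasDerivAt_apply_snd (G := U) (p := x) (1, 0) hU'
    apply h0.congr_of_eventuallyEq
    filter_upwards [hmemV] with b hb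
    exact (hasDerivAt_fst (G := U) (p := (x.1, b)) (hdiffU _ hb)).deriv
  -- the same via CR1 and the product rule
  have hD2 : HasDerivAt (fun b => deriv (fun a => u a b) x.1)
      (Real.cos x.2 * deriv (fun b' => v x.1 b') x.2
        + Real.sin x.2 * fderiv ℝ (fderiv ℝ V) x (0, 1) (0, 1)) x.2 := by
    have hmul := (Real.hasDerivAt_sin x.2).mul hB
    apply hmul.congr_of_eventuallyEq
    filter_upwards [hmemV] with b hb
    have h1 := hCR1 (x.1, b) hb
    have hs : Real.sin b ≠ 0 := hSsin (x.1, b) hb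
    simp only [Pi.mul_apply] at h1 ⊢
    field_simp at h1 ⊢
    linarith [h1]
  have hD2val : fderiv ℝ (fderiv ℝ U) x (0, 1) (1, 0)
      = Real.cos x.2 * deriv (fun b' => v x.1 b') x.2
        + Real.sin x.2 * fderiv ℝ (fderiv ℝ V) x (0, 1) (0, 1) := hD2'.unique hD2
  -- A : second α-derivative of v via CR2
  have hAinner : HasDerivAt (fun a => deriv (fun b => u a b) x.2)
      (fderiv ℝ (fderiv ℝ U) x (1, 0) (0, 1)) x.1 := by
    have h0 := hasDerivAt_apply_fst (G := U) (p := x) (0, 1) hU'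
    apply h0.congr_of_eventuallyEq
    filter_upwards [hmemH] with a ha
    exact (hasDerivAt_snd (G := U) (p := (a, x.2)) (hdiffU _ ha)).deriv
  have hA : HasDerivAt (fun a => deriv (fun a' => v a' x.2) a)
      (-(Real.sin x.2) * fderiv ℝ (fderiv ℝ U) x (1, 0) (0, 1)) x.1 := by
    have hmul := hAinner.const_mul (-(Real.sin x.2))
    apply hmul.congr_of_eventuallyEq
    filter_upwards [hmemH] with a ha
    have h2 := hCR2 (a, x.2) ha
    field_simp at h2 ⊢
    linarith [h2]
  -- symmetry of second derivatives of u
  have hsym : fderiv ℝ (fderiv ℝ U) x (1, 0) (0, 1)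
      = fderiv ℝ (fderiv ℝ U) x (0, 1) (1, 0) := by
    apply second_derivative_symmetric_of_eventually (f := U) (f' := fderiv ℝ U)
    · filter_upwards [hS.mem_nhds hx] with y hy
      exact (hdiffU y hy).hasFDerivAt
    · exact hU'.hasFDerivAt
  -- put it together
  rw [hA.deriv, hB.deriv, hsym, hD2val, hC]
  have hcos := Real.cos x.2
  field_simp
  ring
end
end
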